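/- Let A = HNN(G₁, C, t) = ⟨G₁, t | c^t = c₁⟩ be a proper pro-p HNN extension of a finitely generated pro-p group G₁ with procyclic associated subgroups C = ⟨c⟩ and C₁ = ⟨c₁⟩. Then d(G₁) ≤ d(A) ≤ d(G₁) + 1, and d(A) = d(G₁) + 1 if and only if cΦ(G₁) = c₁Φ(G₁). -/

import Mathlib

set_option maxHeartbeats 1000000
set_option synthInstance.maxHeartbeats 400000


/-- A pro-`p` group: a compact, Hausdorff, totally disconnected topological group in
which every open normal subgroup has `p`-power index. -/
def IsProP (p : ℕ) (G : Type*) [Group G] [TopologicalSpace G] : Prop :=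
  IsTopologicalGroup G ∧ CompactSpace G ∧ T2Space G ∧ TotallyDisconnectedSpace G ∧
    ∀ U : Subgroup G, U.Normal → IsOpen (U : Set G) → ∃ k : ℕ, U.index = p ^ k

/-- The minimal number of topological generators of a topological group. -/
noncomputable def topGenNum (G : Type*) [Group G] [TopologicalSpace G]
    [IsTopologicalGroup G] : ℕ :=
  sInf {n : ℕ | ∃ s : Fin n → G,
    (Subgroup.closure (Set.range s)).topologicalClosure = ⊤}

/-- A topological group is topologically finitely generated. -/
def TopFG (G : Type*) [Group G] [TopologicalSpace G] [IsTopologicalGroup G] : Prop :=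
  ∃ n : ℕ, ∃ s : Fin n → G,
    (Subgroup.closure (Set.range s)).topologicalClosure = ⊤

/-- `F` is a free pro-`p` group of rank `d`: it has a `d`-tuple of topological
generators which is universal for continuous maps to finite `p`-groups. -/
def IsFreeProP (p : ℕ) (F : Type*) [Group F] [TopologicalSpace F]
    [IsTopologicalGroup F] (d : ℕ) : Prop :=
  ∃ b : Fin d → F,
    (Subgroup.closure (Set.range b)).topologicalClosure = ⊤ ∧
    ∀ (P : Type) [Group P] [Finite P] [TopologicalSpace P] [DiscreteTopology P],
      IsPGroup p P → ∀ f : Fin d → P,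
        ∃! φ : F →* P, Continuous φ ∧ ∀ i, φ (b i) = f i

/-- The Frattini subgroup of a pro-`p` group: the closure of `[G,G]·G^p`. -/
def proFrattini (p : ℕ) (G : Type*) [Group G] [TopologicalSpace G]
    [IsTopologicalGroup G] : Subgroup G :=
  (commutator G ⊔ Subgroup.closure {x : G | ∃ g : G, g ^ p = x}).topologicalClosure

section Aux

open Module Subgroup
open scoped commutatorElement

variable {p : ℕ}

/-- The `ZMod p`-module of locally constant additive characters of `G`. -/
def homP (p : ℕ) (G : Type*) [Group G] [TopologicalSpace G] :
    Submodule (ZMod p) (G → ZMod p) where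
  carrier := {f | (∀ x y, f (x * y) = f x + f y) ∧ IsLocallyConstant f}
  add_mem' := fun hf hg =>
    ⟨fun x y => by simp only [Pi.add_apply, hf.1, hg.1]; abel, hf.2.add hg.2⟩
  zero_mem' := ⟨fun x y => by simp, IsLocallyConstant.const 0⟩
  smul_mem' := fun c f hf =>
    ⟨fun x y => by simp only [Pi.smul_apply, hf.1, smul_eq_mul]; ring,
     (IsLocallyConstant.const c).mul hf.2⟩

lemma homP_one {G : Type*} [Group G] [TopologicalSpace G] {f : G → ZMod p}
    (hf : f ∈ homP p G) : f 1 = 0 := by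
  have := hf.1 1 1
  simp only [one_mul] at this
  exact (left_eq_add.mp this)

lemma homP_inv {G : Type*} [Group G] [TopologicalSpace G] {f : G → ZMod p}
    (hf : f ∈ homP p G) (x : G) : f x⁻¹ = - f x := by
  have := hf.1 x⁻¹ x
  rw [inv_mul_cancel, homP_one hf] at this
  exact eq_neg_of_add_eq_zero_left this.symm

lemma homP_pow {G : Type*} [Group G] [TopologicalSpace G] {f : G → ZMod p}
    (hf : f ∈ homP p G) (x : G) (n : ℕ) : f (x ^ n) = n • f x := by
  induction n with
  | zero => simpa using homP_one hf
  | succ k ih => rw [pow_succ, hf.1, ih, succ_nsmul]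

/-- The zero set of an element of `homP` is a closed subgroup. -/
def homPKer {G : Type*} [Group G] [TopologicalSpace G] {f : G → ZMod p}
    (hf : f ∈ homP p G) : Subgroup G where
  carrier := {x | f x = 0}
  one_mem' := homP_one hf
  mul_mem' := fun ha hb => by simp only [Set.mem_setOf_eq] at *; rw [hf.1]; rw [ha, hb]; ring
  inv_mem' := fun ha => by simp only [Set.mem_setOf_eq] at *; rw [homP_inv hf, ha]; ring

lemma homPKer_isClosed {G : Type*} [Group G] [TopologicalSpace G] {f : G → ZMod p}
    (hf : f ∈ homP p G) : IsClosed (homPKer hf : Set G) := by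
  have : (homPKer hf : Set G) = f ⁻¹' {0} := rfl
  rw [this]
  refine isOpen_compl_iff.mp ?_
  rw [← Set.preimage_compl]
  exact hf.2 _

lemma homP_eq_zero_of_dense {G : Type*} [Group G] [TopologicalSpace G] [IsTopologicalGroup G]
    {f : G → ZMod p} (hf : f ∈ homP p G) {n : ℕ} {s : Fin n → G}
    (hs : (Subgroup.closure (Set.range s)).topologicalClosure = ⊤)
    (h0 : ∀ i, f (s i) = 0) : f = 0 := by
  have hle : (Subgroup.closure (Set.range s)).topologicalClosure ≤ homPKer hf := by
    apply Subgroup.topologicalClosure_minimal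
    · rw [Subgroup.closure_le]
      rintro x ⟨i, rfl⟩
      exact h0 i
    · exact homPKer_isClosed hf
  rw [hs] at hle
  funext x
  exact hle (Subgroup.mem_top x)

/-- Separating functional on a finite elementary abelian `p`-group. -/
lemma existsElemAbFunctional' (hp : p.Prime) {T : Type*} [CommGroup T] [Finite T]
    (hexp : ∀ x : T, x ^ p = 1) {z : T} (hz : z ≠ 1) :
    ∃ χ : T → ZMod p, (∀ a b, χ (a * b) = χ a + χ b) ∧ χ z ≠ 0 := by
  haveI : Fact p.Prime := ⟨hp⟩
  haveI : NeZero p := ⟨hp.ne_zero⟩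
  have m : Module (ZMod p) (Additive T) := AddCommGroup.zmodModule (by
    intro x
    apply Additive.toMul.injective
    rw [toMul_nsmul]
    simp [hexp])
  letI := m
  have hv : (Additive.ofMul z : Additive T) ≠ 0 := hz
  obtain ⟨φ, hφ⟩ : ∃ φ : Additive T →ₗ[ZMod p] ZMod p, φ (Additive.ofMul z) ≠ 0 := by
    by_contra h
    push_neg at h
    exact hv ((Module.forall_dual_apply_eq_zero_iff (ZMod p) _).mp h)
  refine ⟨fun t => φ (Additive.ofMul t), fun a b => ?_, hφ⟩
  rw [← map_add]
  rfl

lemma existsElemAbFunctional (hp : p.Prime) {T : Type*} [Group T] [Finite T]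
    (hcomm : ∀ a b : T, a * b = b * a) (hexp : ∀ x : T, x ^ p = 1)
    {z : T} (hz : z ≠ 1) :
    ∃ χ : T → ZMod p, (∀ a b, χ (a * b) = χ a + χ b) ∧ χ z ≠ 0 := by
  letI : CommGroup T := { ‹Group T› with mul_comm := hcomm }
  exact existsElemAbFunctional' hp hexp hz

/-- A proper subgroup of a finite `p`-group is killed by a nonzero `ZMod p`-character. -/
lemma pgroup_functional (hp : p.Prime) {Q : Type*} [Group Q] [Finite Q]
    (hQ : IsPGroup p Q) {M : Subgroup Q} (hM : M ≠ ⊤) :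
    ∃ χ : Q → ZMod p, (∀ a b, χ (a * b) = χ a + χ b) ∧ (∀ m ∈ M, χ m = 0) ∧ χ ≠ 0 := by
  haveI : Fact p.Prime := ⟨hp⟩
  obtain ⟨M', hM'c, hMM'⟩ := (eq_top_or_exists_le_coatom M).resolve_left hM
  haveI : Group.IsNilpotent Q := hQ.isNilpotent
  haveI hnorm : M'.Normal := by
    have := normalizerCondition_of_isNilpotent (G := Q)
    exact Subgroup.NormalizerCondition.normal_of_coatom M' this hM'c
  obtain ⟨x₀, hx₀⟩ : ∃ x₀ : Q, x₀ ∉ M' := by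
    by_contra h
    push_neg at h
    exact hM'c.1 ((Subgroup.eq_top_iff' M').mpr h)
  have hx₀ne : (QuotientGroup.mk x₀ : Q ⧸ M') ≠ 1 := by
    simpa [QuotientGroup.eq_one_iff] using hx₀
  haveI : Nontrivial (Q ⧸ M') := ⟨_, _, hx₀ne⟩
  -- the quotient by the coatom has cardinality p
  have hcard : Nat.card (Q ⧸ M') = p := by
    obtain ⟨k, hk⟩ := IsPGroup.iff_card.mp (hQ.to_quotient M')
    have h1 : 1 < Nat.card (Q ⧸ M') := Finite.one_lt_card
    have hkne : k ≠ 0 := by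
      rintro rfl
      rw [hk] at h1
      norm_num at h1
    have hdvd : p ∣ Nat.card (Q ⧸ M') := by
      rw [hk]
      exact dvd_pow_self p hkne
    obtain ⟨y, hy⟩ := exists_prime_orderOf_dvd_card' (G := Q ⧸ M') p hdvd
    have hS : Subgroup.zpowers y = ⊤ := by
      have hyne : y ≠ 1 := by
        intro h
        rw [h, orderOf_one] at hy
        exact hp.one_lt.ne' hy.symm
      obtain ⟨w, rfl⟩ := QuotientGroup.mk'_surjective M' y
      have hK : M' < (Subgroup.zpowers (QuotientGroup.mk' M' w)).comap (QuotientGroup.mk' M') := by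
        refine lt_of_le_of_ne (fun m hm => ?_) (fun h => ?_)
        · simp only [Subgroup.mem_comap]
          have : QuotientGroup.mk' M' m = 1 := by
            simpa [QuotientGroup.eq_one_iff] using hm
          rw [this]
          exact Subgroup.one_mem _
        · apply hyne
          have hw : w ∈ (Subgroup.zpowers (QuotientGroup.mk' M' w)).comap (QuotientGroup.mk' M') :=
            Subgroup.mem_comap.mpr (Subgroup.mem_zpowers _)
          rw [← h] at hw
          simpa [QuotientGroup.eq_one_iff] using hw
      have hKtop := hM'c.2 _ hK
      have := Subgroup.map_comap_eq_self_of_surjective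
        (QuotientGroup.mk'_surjective M') (Subgroup.zpowers (QuotientGroup.mk' M' w))
      rw [hKtop] at this
      rw [← this]
      exact Subgroup.map_top_of_surjective _ (QuotientGroup.mk'_surjective M')
    calc Nat.card (Q ⧸ M') = Nat.card (Subgroup.zpowers y) := by rw [hS, Subgroup.card_top]
    _ = orderOf y := Nat.card_zpowers y
    _ = p := hy
  haveI : IsCyclic (Q ⧸ M') := isCyclic_of_prime_card hcard
  letI : CommGroup (Q ⧸ M') := IsCyclic.commGroup
  obtain ⟨χ₀, hχ₀hom, hχ₀ne⟩ := existsElemAbFunctional hp (T := Q ⧸ M')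
    (fun a b => mul_comm a b) (fun x => by rw [← hcard]; exact pow_card_eq_one') hx₀ne
  have hχ₀one : χ₀ 1 = 0 := by
    have := hχ₀hom 1 1
    simp only [one_mul] at this
    exact (left_eq_add.mp this)
  refine ⟨fun q => χ₀ (QuotientGroup.mk q), fun a b => by exact hχ₀hom (QuotientGroup.mk a) (QuotientGroup.mk b), fun m hm => ?_, fun h => ?_⟩
  · have h1 : (QuotientGroup.mk m : Q ⧸ M') = 1 := by
      simpa [QuotientGroup.eq_one_iff] using hMM' hm
    show χ₀ (QuotientGroup.mk m) = 0
    rw [h1, hχ₀one]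
  · exact hχ₀ne (congrFun h x₀)

lemma isLocallyConstant_mk {G : Type*} [Group G] [TopologicalSpace G] [IsTopologicalGroup G]
    {N : Subgroup G} (hN : IsOpen (N : Set G)) :
    IsLocallyConstant (QuotientGroup.mk : G → G ⧸ N) := by
  intro s
  rw [isOpen_iff_forall_mem_open]
  intro x hx
  refine ⟨(fun y => x⁻¹ * y) ⁻¹' N, fun y hy => ?_, (continuous_mul_left x⁻¹).isOpen_preimage _ hN, by simpa using N.one_mem⟩
  have : (QuotientGroup.mk x : G ⧸ N) = QuotientGroup.mk y := QuotientGroup.eq.mpr hy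
  simpa [← this] using hx

/-- In a pro-`p` group, every proper closed subgroup is killed by some nonzero
locally constant character. -/
lemma exists_homP_vanish_of_notMem (hp : p.Prime) {G : Type*} [Group G] [TopologicalSpace G]
    [IsTopologicalGroup G] [CompactSpace G] [T2Space G] [TotallyDisconnectedSpace G]
    (hindex : ∀ U : Subgroup G, U.Normal → IsOpen (U : Set G) → ∃ k : ℕ, U.index = p ^ k)
    {H : Subgroup G} (hHc : IsClosed (H : Set G)) {g : G} (hg : g ∉ H) :
    ∃ f, f ∈ homP p G ∧ (∀ x ∈ H, f x = 0) ∧ f ≠ 0 := by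
  have hU : IsOpen ((fun u => g * u) ⁻¹' (↑H)ᶜ) :=
    (continuous_mul_left g).isOpen_preimage _ hHc.isOpen_compl
  have h1U : (1 : G) ∈ (fun u => g * u) ⁻¹' (↑H)ᶜ := by simpa using hg
  obtain ⟨V, hVclopen, h1V, hVU⟩ := compact_exists_isClopen_in_isOpen hU h1U
  obtain ⟨N, hNV⟩ := IsTopologicalGroup.exist_openNormalSubgroup_sub_clopen_nhds_of_one hVclopen h1V
  haveI : N.toSubgroup.Normal := N.isNormal'
  haveI : Finite (G ⧸ N.toSubgroup) :=
    Subgroup.quotient_finite_of_isOpen N.toSubgroup N.toOpenSubgroup.isOpen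
  have hQp : IsPGroup p (G ⧸ N.toSubgroup) := by
    obtain ⟨k, hk⟩ := hindex N.toSubgroup inferInstance N.toOpenSubgroup.isOpen
    exact IsPGroup.of_card (by rw [← Subgroup.index_eq_card]; exact hk)
  set Mq := H.map (QuotientGroup.mk' N.toSubgroup) with hMqdef
  have hgMq : QuotientGroup.mk' N.toSubgroup g ∉ Mq := by
    rintro ⟨h₀, hh₀, heq⟩
    have hmem : g⁻¹ * h₀ ∈ N.toSubgroup := by
      rw [← QuotientGroup.eq]
      exact heq.symm
    have : g * (g⁻¹ * h₀) ∈ (↑H : Set G)ᶜ := hVU (hNV hmem)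
    simp only [mul_inv_cancel_left] at this
    exact this hh₀
  have hMq : Mq ≠ ⊤ := fun h => hgMq (h ▸ Subgroup.mem_top _)
  obtain ⟨χ, hχhom, hχM, hχne⟩ := pgroup_functional hp hQp hMq
  refine ⟨fun x => χ (QuotientGroup.mk x), ⟨fun x y => by exact hχhom (QuotientGroup.mk x) (QuotientGroup.mk y),
    (isLocallyConstant_mk N.toOpenSubgroup.isOpen).comp χ⟩, fun x hx => ?_, fun h => ?_⟩
  · exact hχM _ ⟨x, hx, rfl⟩
  · apply hχne
    funext q
    obtain ⟨x, rfl⟩ := QuotientGroup.mk'_surjective N.toSubgroup q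
    exact congrFun h x
/-- Key generation criterion: a tuple whose only common character zero is trivial
topologically generates a pro-`p` group. -/
lemma dense_of_functionals (hp : p.Prime) {G : Type*} [Group G] [TopologicalSpace G]
    [IsTopologicalGroup G] [CompactSpace G] [T2Space G] [TotallyDisconnectedSpace G]
    (hindex : ∀ U : Subgroup G, U.Normal → IsOpen (U : Set G) → ∃ k : ℕ, U.index = p ^ k)
    {n : ℕ} (s : Fin n → G)
    (hsep : ∀ f ∈ homP p G, (∀ i, f (s i) = 0) → f = 0) :
    (Subgroup.closure (Set.range s)).topologicalClosure = ⊤ := by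
  by_contra hne
  obtain ⟨g, hg⟩ : ∃ g, g ∉ (Subgroup.closure (Set.range s)).topologicalClosure := by
    by_contra h
    push_neg at h
    exact hne ((Subgroup.eq_top_iff' _).mpr h)
  obtain ⟨f, hf, hfH, hfne⟩ := exists_homP_vanish_of_notMem hp hindex
    (Subgroup.isClosed_topologicalClosure _) hg
  refine hfne (hsep f hf fun i => hfH _ ?_)
  exact Subgroup.le_topologicalClosure _ (Subgroup.subset_closure (Set.mem_range_self i))

lemma homP_vanish_frattini {G : Type*} [Group G] [TopologicalSpace G] [IsTopologicalGroup G]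
    {f : G → ZMod p} (hf : f ∈ homP p G) {z : G} (hz : z ∈ proFrattini p G) : f z = 0 := by
  have hle : proFrattini p G ≤ homPKer hf := by
    apply Subgroup.topologicalClosure_minimal _ _ (homPKer_isClosed hf)
    rw [sup_le_iff]
    constructor
    · rw [commutator_def, Subgroup.commutator_le]
      intro g₁ _ g₂ _
      show f ⁅g₁, g₂⁆ = 0
      rw [commutatorElement_def, hf.1, hf.1, hf.1, homP_inv hf, homP_inv hf]
      ring
    · rw [Subgroup.closure_le]
      rintro x ⟨g, rfl⟩
      show f (g ^ p) = 0
      rw [homP_pow hf, nsmul_eq_mul]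
      simp
  exact hle hz

lemma pPow_closure_normal {G : Type*} [Group G] :
    (Subgroup.closure {x : G | ∃ g : G, g ^ p = x}).Normal := by
  constructor
  intro n hn g
  have h1 : g * n * g⁻¹ = (MulAut.conj g).toMonoidHom n := rfl
  rw [h1]
  have : ((Subgroup.closure {x : G | ∃ g : G, g ^ p = x}).map (MulAut.conj g).toMonoidHom)
      ≤ Subgroup.closure {x : G | ∃ g : G, g ^ p = x} := by
    rw [MonoidHom.map_closure]
    apply Subgroup.closure_mono
    rintro y ⟨x, ⟨w, rfl⟩, rfl⟩
    exact ⟨(MulAut.conj g).toMonoidHom w, by simp [map_pow]⟩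
  exact this ⟨n, hn, rfl⟩

/-- Separation from the Frattini subgroup. -/
lemma exists_homP_of_notMem_frattini (hp : p.Prime) {G : Type*} [Group G] [TopologicalSpace G]
    [IsTopologicalGroup G] [CompactSpace G] [T2Space G] [TotallyDisconnectedSpace G]
    {z : G} (hz : z ∉ proFrattini p G) : ∃ f ∈ homP p G, f z ≠ 0 := by
  set B : Subgroup G := commutator G ⊔ Subgroup.closure {x : G | ∃ g : G, g ^ p = x} with hBdef
  haveI hBnormal : B.Normal := by
    haveI := (pPow_closure_normal (p := p) (G := G))
    exact Subgroup.sup_normal _ _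
  have hBΦ : B ≤ proFrattini p G := Subgroup.le_topologicalClosure _
  have hΦclosed : IsClosed ((proFrattini p G : Subgroup G) : Set G) :=
    Subgroup.isClosed_topologicalClosure _
  have hU : IsOpen ((fun u => z * u) ⁻¹' (↑(proFrattini p G))ᶜ) :=
    (continuous_mul_left z).isOpen_preimage _ hΦclosed.isOpen_compl
  have h1U : (1 : G) ∈ (fun u => z * u) ⁻¹' (↑(proFrattini p G))ᶜ := by simpa using hz
  obtain ⟨V, hVclopen, h1V, hVU⟩ := compact_exists_isClopen_in_isOpen hU h1U
  obtain ⟨N, hNV⟩ := IsTopologicalGroup.exist_openNormalSubgroup_sub_clopen_nhds_of_one hVclopen h1V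
  haveI : N.toSubgroup.Normal := N.isNormal'
  set K : Subgroup G := B ⊔ N.toSubgroup with hKdef
  haveI hKnormal : K.Normal := Subgroup.sup_normal _ _
  have hKopen : IsOpen (K : Set G) := Subgroup.isOpen_mono le_sup_right N.toOpenSubgroup.isOpen
  have hzK : z ∉ K := by
    intro hzmem
    have hzmem' : z ∈ (↑(B ⊔ N.toSubgroup) : Set G) := hzmem
    rw [Subgroup.mul_normal] at hzmem'
    obtain ⟨b, hb, u, hu, rfl⟩ := hzmem'
    have : b * u * u⁻¹ ∈ (↑(proFrattini p G) : Set G)ᶜ := hVU (hNV (inv_mem hu))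
    simp only [mul_inv_cancel_right] at this
    exact this (hBΦ hb)
  haveI : Finite (G ⧸ K) := Subgroup.quotient_finite_of_isOpen K hKopen
  have hcomm : ∀ a b : G ⧸ K, a * b = b * a := by
    intro a b
    obtain ⟨x, rfl⟩ := QuotientGroup.mk'_surjective K a
    obtain ⟨y, rfl⟩ := QuotientGroup.mk'_surjective K b
    have : (QuotientGroup.mk (x * y) : G ⧸ K) = QuotientGroup.mk (y * x) := by
      rw [QuotientGroup.eq]
      have : (x * y)⁻¹ * (y * x) = ⁅y⁻¹, x⁻¹⁆ := by
        rw [commutatorElement_def]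
        group
      rw [this]
      exact Subgroup.mem_sup_left
        (Subgroup.mem_sup_left (Subgroup.commutator_mem_commutator (Subgroup.mem_top _) (Subgroup.mem_top _)))
    exact this
  have hexp : ∀ a : G ⧸ K, a ^ p = 1 := by
    intro a
    obtain ⟨x, rfl⟩ := QuotientGroup.mk'_surjective K a
    have : (QuotientGroup.mk (x ^ p) : G ⧸ K) = 1 := by
      rw [QuotientGroup.eq_one_iff]
      exact Subgroup.mem_sup_left (Subgroup.mem_sup_right (Subgroup.subset_closure ⟨x, rfl⟩))
    rw [← this]
    rfl
  have hzne : (QuotientGroup.mk z : G ⧸ K) ≠ 1 := by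
    rw [Ne, QuotientGroup.eq_one_iff]
    exact hzK
  obtain ⟨χ, hχhom, hχz⟩ := existsElemAbFunctional hp hcomm hexp hzne
  exact ⟨fun x => χ (QuotientGroup.mk x), ⟨fun x y => by exact hχhom (QuotientGroup.mk x) (QuotientGroup.mk y),
    (isLocallyConstant_mk hKopen).comp χ⟩, hχz⟩

/-- In a finite-dimensional space of functions, one can find evaluation points that
jointly separate. -/
lemma exists_eval_points {K X : Type*} [Field K] (D : ℕ) (W : Submodule K (X → K))
    (hfd : FiniteDimensional K W) (hD : Module.finrank K W = D) :
    ∃ x : Fin D → X, ∀ f ∈ W, (∀ i, f (x i) = 0) → f = 0 := by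
  induction D generalizing W with
  | zero =>
    refine ⟨finZeroElim, fun f hf _ => ?_⟩
    haveI := hfd
    haveI : Subsingleton W := Module.finrank_zero_iff.mp hD
    have : (⟨f, hf⟩ : W) = 0 := Subsingleton.elim _ _
    simpa using congrArg Subtype.val this
  | succ n ih =>
    haveI := hfd
    haveI : Nontrivial W := Module.nontrivial_of_finrank_pos (R := K) (by omega)
    obtain ⟨f₀, hf₀⟩ := exists_ne (0 : W)
    have hf₀' : (f₀ : X → K) ≠ 0 := fun h => hf₀ (Subtype.ext h)
    obtain ⟨x₀, hx₀⟩ : ∃ x₀, (f₀ : X → K) x₀ ≠ 0 := by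
      by_contra h
      push_neg at h
      exact hf₀' (funext h)
    let ψ : (X → K) →ₗ[K] K := LinearMap.proj x₀
    let φ : W →ₗ[K] K := ψ.comp W.subtype
    set W' : Submodule K (X → K) := W ⊓ LinearMap.ker ψ with hW'def
    have hle : W' ≤ W := inf_le_left
    haveI hfd' : FiniteDimensional K W' := Submodule.finiteDimensional_of_le hle
    have hker : Submodule.comap W.subtype W' = LinearMap.ker φ := by
      ext ⟨w, hw⟩
      simp [hW'def, φ, ψ, hw]
    have hφne : φ ≠ 0 := by
      intro h
      apply hx₀
      have := congrArg (fun ρ => ρ f₀) h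
      simpa [φ, ψ] using this
    have hrk : Module.finrank K W' = n := by
      have h2 := Module.Dual.finrank_ker_add_one_of_ne_zero hφne
      rw [hD] at h2
      have h3 : Module.finrank K (LinearMap.ker φ) = n := by omega
      rw [← h3, ← hker]
      exact (Submodule.comapSubtypeEquivOfLe hle).symm.finrank_eq
    obtain ⟨x, hx⟩ := ih W' hfd' hrk
    refine ⟨Fin.cons x₀ x, fun f hf h0 => ?_⟩
    refine hx f ⟨hf, ?_⟩ fun i => ?_
    · have := h0 0
      simpa [ψ] using this
    · simpa using h0 i.succ

lemma homP_fd_of_gen [Fact p.Prime] {G : Type*} [Group G] [TopologicalSpace G] [IsTopologicalGroup G]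
    {n : ℕ} {s : Fin n → G}
    (hs : (Subgroup.closure (Set.range s)).topologicalClosure = ⊤) :
    FiniteDimensional (ZMod p) (homP p G) ∧ Module.finrank (ZMod p) (homP p G) ≤ n := by
  let L : homP p G →ₗ[ZMod p] (Fin n → ZMod p) :=
    (LinearMap.pi fun i => LinearMap.proj (s i)).comp (homP p G).subtype
  have hL : Function.Injective L := by
    rw [← LinearMap.ker_eq_bot, eq_bot_iff]
    rintro ⟨f, hf⟩ hker
    have hker' : L ⟨f, hf⟩ = 0 := hker
    have h0 : ∀ i, f (s i) = 0 := fun i => by exact congrFun hker' i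
    exact Submodule.mem_bot _ |>.mpr (Subtype.ext (homP_eq_zero_of_dense hf hs h0))
  haveI : FiniteDimensional (ZMod p) (homP p G) := FiniteDimensional.of_injective L hL
  refine ⟨inferInstance, ?_⟩
  have := LinearMap.finrank_le_finrank_of_injective hL
  rwa [Module.finrank_fin_fun] at this

lemma topGenNum_eq_finrank [Fact p.Prime] (hp : p.Prime) {G : Type*} [Group G] [TopologicalSpace G]
    [IsTopologicalGroup G] [CompactSpace G] [T2Space G] [TotallyDisconnectedSpace G]
    (hindex : ∀ U : Subgroup G, U.Normal → IsOpen (U : Set G) → ∃ k : ℕ, U.index = p ^ k)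
    (hfd : FiniteDimensional (ZMod p) (homP p G)) :
    topGenNum G = Module.finrank (ZMod p) (homP p G) := by
  haveI : Fact p.Prime := ⟨hp⟩
  have hmem : Module.finrank (ZMod p) (homP p G) ∈
      {n : ℕ | ∃ s : Fin n → G, (Subgroup.closure (Set.range s)).topologicalClosure = ⊤} := by
    obtain ⟨x, hx⟩ := exists_eval_points (Module.finrank (ZMod p) (homP p G)) (homP p G) hfd rfl
    exact ⟨x, dense_of_functionals hp hindex x fun f hf h0 => hx f hf h0⟩
  apply le_antisymm
  · exact Nat.sInf_le hmem
  · obtain ⟨s, hs⟩ := Nat.sInf_mem (Set.nonempty_of_mem hmem)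
    exact (homP_fd_of_gen hs).2

/-- A `homP` element as a monoid homomorphism into `Multiplicative (ZMod p)`. -/
def homPMonoidHom {G : Type*} [Group G] [TopologicalSpace G] {f : G → ZMod p}
    (hf : f ∈ homP p G) : G →* Multiplicative (ZMod p) where
  toFun x := Multiplicative.ofAdd (f x)
  map_one' := by show Multiplicative.ofAdd (f 1) = 1; rw [homP_one hf]; rfl
  map_mul' x y := by
    show Multiplicative.ofAdd (f (x * y)) = Multiplicative.ofAdd (f x) * Multiplicative.ofAdd (f y)
    rw [hf.1]
    rfl

end Aux

/-- Let `A = HNN(G₁, C, t) = ⟨G₁, t | c^t = c₁⟩` be a proper pro-`p`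
HNN extension of a finitely generated pro-`p` group `G₁` with procyclic associated
subgroups `C = ⟨c⟩` and `C₁ = ⟨c₁⟩`; `A` is characterized by its universal property for
continuous maps to finite `p`-groups, and properness means `G₁` embeds in `A`.  Then
`d(G₁) ≤ d(A) ≤ d(G₁) + 1`, and `d(A) = d(G₁) + 1` if and only if
`cΦ(G₁) = c₁Φ(G₁)`, i.e. iff `c⁻¹ * c₁ ∈ Φ(G₁)`. -/
theorem rank_proP_HNN_extension
    {p : ℕ} (hp : p.Prime)
    {G₁ : Type*} [Group G₁] [TopologicalSpace G₁] [IsTopologicalGroup G₁]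
    {A : Type*} [Group A] [TopologicalSpace A] [IsTopologicalGroup A]
    (h₁ : IsProP p G₁) (hA : IsProP p A) (hfg₁ : TopFG G₁)
    (ι : G₁ →* A) (hιcont : Continuous ι) (hιinj : Function.Injective ι)
    (c c₁ : G₁) (t : A) (hrel : t⁻¹ * ι c * t = ι c₁)
    (huniv : ∀ (P : Type) [Group P] [Finite P] [TopologicalSpace P]
      [DiscreteTopology P], IsPGroup p P →
      ∀ (f : G₁ →* P), Continuous f → ∀ s : P, s⁻¹ * f c * s = f c₁ →
        ∃! φ : A →* P, Continuous φ ∧ φ.comp ι = f ∧ φ t = s) :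
    (topGenNum G₁ ≤ topGenNum A ∧ topGenNum A ≤ topGenNum G₁ + 1) ∧
    (topGenNum A = topGenNum G₁ + 1 ↔ c⁻¹ * c₁ ∈ proFrattini p G₁) := by
  classical
  haveI : Fact p.Prime := ⟨hp⟩
  haveI : NeZero p := ⟨hp.ne_zero⟩
  obtain ⟨_, hcomp₁, hT2₁, hTD₁, hidx₁⟩ := h₁
  obtain ⟨_, hcompA, hT2A, hTDA, hidxA⟩ := hA
  haveI := hcomp₁; haveI := hT2₁; haveI := hTD₁
  haveI := hcompA; haveI := hT2A; haveI := hTDA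
  obtain ⟨n₀, s₀, hs₀⟩ := hfg₁
  haveI hfdG : FiniteDimensional (ZMod p) (homP p G₁) := (homP_fd_of_gen hs₀).1
  set z := c⁻¹ * c₁ with hzdef
  set Wsub : Submodule (ZMod p) (G₁ → ZMod p) :=
    homP p G₁ ⊓ LinearMap.ker (LinearMap.proj (R := ZMod p) (φ := fun _ : G₁ => ZMod p) z)
    with hWdef
  letI : TopologicalSpace (Multiplicative (ZMod p)) := ⊥
  haveI : DiscreteTopology (Multiplicative (ZMod p)) := ⟨rfl⟩
  have hPp : IsPGroup p (Multiplicative (ZMod p)) :=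
    IsPGroup.of_card (n := 1)
      (by rw [Nat.card_congr (Multiplicative.toAdd (α := ZMod p)), Nat.card_zmod, pow_one])
  -- restriction to G₁ lands in Wsub
  have hmemW : ∀ f, f ∈ homP p A → (f ∘ ⇑ι) ∈ homP p G₁ := fun f hf =>
    ⟨fun x y => by simp only [Function.comp_apply, map_mul]; exact hf.1 _ _,
     hf.2.comp_continuous hιcont⟩
  have hz0 : ∀ f, f ∈ homP p A → (f ∘ ⇑ι) z = 0 := by
    intro f hf
    have h1 : f (ι c₁) = f (ι c) := by
      rw [← hrel, hf.1, hf.1, homP_inv hf]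
      abel
    show f (ι (c⁻¹ * c₁)) = 0
    rw [map_mul, map_inv, hf.1, homP_inv hf, h1]
    ring
  -- injectivity of restriction
  have hinjA : ∀ f, f ∈ homP p A → (∀ x, f (ι x) = 0) → f t = 0 → f = 0 := by
    intro f hf hfι hft
    obtain ⟨φ₀, hφ₀, huniq⟩ := huniv (Multiplicative (ZMod p)) hPp 1
      (by exact continuous_const) 1 (by simp)
    have h1 : homPMonoidHom hf = φ₀ := by
      apply huniq
      refine ⟨(hf.2.comp ⇑Multiplicative.ofAdd).continuous, ?_, ?_⟩
      · ext x
        show Multiplicative.ofAdd (f (ι x)) = 1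
        rw [hfι x]
        rfl
      · show Multiplicative.ofAdd (f t) = 1
        rw [hft]
        rfl
    have h2 : (1 : A →* Multiplicative (ZMod p)) = φ₀ := by
      apply huniq
      exact ⟨by exact continuous_const, MonoidHom.one_comp ι, rfl⟩
    have h3 : homPMonoidHom hf = 1 := h1.trans h2.symm
    funext x
    have h4 := DFunLike.congr_fun h3 x
    exact congrArg Multiplicative.toAdd h4
  -- surjectivity of restriction
  have hsurjA : ∀ w, w ∈ homP p G₁ → w z = 0 → ∀ a : ZMod p,
      ∃ f, f ∈ homP p A ∧ (f ∘ ⇑ι) = w ∧ f t = a := by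
    intro w hw hwz a
    have hcc : w c₁ = w c := by
      have h5 : w (c * z) = w c + w z := hw.1 _ _
      rw [hzdef, mul_inv_cancel_left] at h5
      rw [h5, hwz, add_zero]
    have hcomm : ∀ s x : Multiplicative (ZMod p), s⁻¹ * x * s = x := fun s x => by
      rw [mul_comm s⁻¹ x, mul_assoc, inv_mul_cancel, mul_one]
    obtain ⟨φ, ⟨hφc, hφι, hφt⟩, _⟩ := huniv (Multiplicative (ZMod p)) hPp
      (homPMonoidHom hw) ((hw.2.comp ⇑Multiplicative.ofAdd).continuous)
      (Multiplicative.ofAdd a)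
      (by rw [hcomm]; show Multiplicative.ofAdd (w c) = Multiplicative.ofAdd (w c₁); rw [hcc])
    refine ⟨fun x => Multiplicative.toAdd (φ x),
      ⟨fun x y => by
        show Multiplicative.toAdd (φ (x * y)) = Multiplicative.toAdd (φ x) + Multiplicative.toAdd (φ y)
        rw [map_mul]
        rfl,
       ((IsLocallyConstant.iff_continuous ⇑φ).mpr hφc).comp ⇑Multiplicative.toAdd⟩, ?_, ?_⟩
    · funext x
      have h6 := DFunLike.congr_fun hφι x
      exact congrArg Multiplicative.toAdd h6
    · simpa using congrArg Multiplicative.toAdd hφt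
  -- the linear isomorphism homP A ≃ Wsub × ZMod p
  let Ψ : homP p A →ₗ[ZMod p] (↥Wsub × ZMod p) :=
    { toFun := fun f => (⟨(f : A → ZMod p) ∘ ⇑ι, Submodule.mem_inf.mpr
        ⟨hmemW f f.2, LinearMap.mem_ker.mpr (by exact hz0 f f.2)⟩⟩, (f : A → ZMod p) t)
      map_add' := fun f g => by
        refine Prod.ext (Subtype.ext ?_) ?_ <;> rfl
      map_smul' := fun m f => by
        refine Prod.ext (Subtype.ext ?_) ?_ <;> rfl }
  have hΨbij : Function.Bijective Ψ := by
    constructor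
    · intro f g hfg
      have hd : Ψ (f - g) = 0 := by
        rw [map_sub, hfg, sub_self]
      have hc1 : ((f - g : homP p A) : A → ZMod p) ∘ ⇑ι = 0 :=
        congrArg Subtype.val (congrArg Prod.fst hd)
      have hc2 : ((f - g : homP p A) : A → ZMod p) t = 0 := congrArg Prod.snd hd
      have h7 : ((f - g : homP p A) : A → ZMod p) = 0 :=
        hinjA _ (f - g).2 (fun x => congrFun hc1 x) hc2
      have : f - g = 0 := Subtype.ext h7
      rwa [sub_eq_zero] at this
    · rintro ⟨⟨w, hw⟩, a⟩
      obtain ⟨hw1, hw2⟩ := Submodule.mem_inf.mp hw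
      obtain ⟨f, hf, hfι, hft⟩ := hsurjA w hw1 (by exact LinearMap.mem_ker.mp hw2) a
      exact ⟨⟨f, hf⟩, Prod.ext (Subtype.ext hfι) hft⟩
  let eΨ := LinearEquiv.ofBijective Ψ hΨbij
  haveI hfdW : FiniteDimensional (ZMod p) Wsub := Submodule.finiteDimensional_of_le inf_le_left
  haveI hfdA : FiniteDimensional (ZMod p) (homP p A) := Module.Finite.equiv eΨ.symm
  have hrkA : Module.finrank (ZMod p) (homP p A) = Module.finrank (ZMod p) Wsub + 1 := by
    rw [eΨ.finrank_eq, Module.finrank_prod, Module.finrank_self]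
  have htgG : topGenNum G₁ = Module.finrank (ZMod p) (homP p G₁) :=
    topGenNum_eq_finrank hp hidx₁ hfdG
  have htgA : topGenNum A = Module.finrank (ZMod p) (homP p A) :=
    topGenNum_eq_finrank hp hidxA hfdA
  by_cases hzΦ : z ∈ proFrattini p G₁
  · have hWV : Wsub = homP p G₁ :=
      le_antisymm inf_le_left (le_inf le_rfl fun f hf => LinearMap.mem_ker.mpr
        (by exact homP_vanish_frattini hf hzΦ))
    have heq : Module.finrank (ZMod p) Wsub = Module.finrank (ZMod p) (homP p G₁) := by
      rw [hWV]
    exact ⟨⟨by omega, by omega⟩, iff_of_true (by omega) hzΦ⟩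
  · obtain ⟨f₀, hf₀mem, hf₀z⟩ := exists_homP_of_notMem_frattini hp hzΦ
    let φz : homP p G₁ →ₗ[ZMod p] ZMod p :=
      (LinearMap.proj (R := ZMod p) (φ := fun _ : G₁ => ZMod p) z).comp (homP p G₁).subtype
    have hφzne : φz ≠ 0 := fun h =>
      hf₀z (by simpa [φz] using congrArg (fun ρ => ρ ⟨f₀, hf₀mem⟩) h)
    have h2 := Module.Dual.finrank_ker_add_one_of_ne_zero hφzne
    have hle : Wsub ≤ homP p G₁ := inf_le_left
    have hker : Submodule.comap (homP p G₁).subtype Wsub = LinearMap.ker φz := by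
      ext ⟨w, hw⟩
      simp [hWdef, φz, hw]
    have h3 : Module.finrank (ZMod p) Wsub
        = Module.finrank (ZMod p) (LinearMap.ker φz) := by
      rw [← hker]
      exact (Submodule.comapSubtypeEquivOfLe hle).symm.finrank_eq
    exact ⟨⟨by omega, by omega⟩, iff_of_false (by omega) hzΦ⟩
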